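/- arXiv:2506.19226 — 5 statements merged into one kernel-verified Lean document; each statement's English description precedes it below -/
import Mathlib

section
/- Let f: Z_N → C be supported on E ⊆ Z_N, and let S ⊆ Z_N with |E|·|S| < N/2. If h: Z_N → C is a nonzero function whose discrete Fourier transform is supported in S, then the L^1 norm of h restricted to the complement of E is strictly greater than the L^1 norm of h restricted to E. -/
open Finset

/-- The discrete Fourier transform on `ZMod N`:
`f̂(ω) = N^{-1/2} ∑_x f(x) e^{-2πiωx/N}`. -/
noncomputable def dft {N : ℕ} [NeZero N] (f : ZMod N → ℂ) (ω : ZMod N) : ℂ :=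
  (Real.sqrt N : ℂ)⁻¹ *
    ∑ x : ZMod N, f x * Complex.exp (-(2 * Real.pi * Complex.I) * ((ω.val * x.val : ℕ) : ℂ) / (N : ℂ))

/-- `||u||_{L^1(A)} = ∑_{x ∈ A} |u(x)|`. -/
noncomputable def l1 {N : ℕ} [NeZero N] (A : Finset (ZMod N)) (u : ZMod N → ℂ) : ℝ :=
  ∑ x ∈ A, ‖u x‖

lemma dft_eq_zmod_dft {N : ℕ} [NeZero N] (f : ZMod N → ℂ) (ω : ZMod N) :
    dft f ω = (Real.sqrt N : ℂ)⁻¹ * ZMod.dft f ω := by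
  unfold dft
  rw [ZMod.dft_apply]
  congr 1
  refine Finset.sum_congr rfl fun x _ => ?_
  rw [smul_eq_mul, mul_comm (ZMod.stdAddChar _) (f x)]
  congr 1
  have hx : -(x * ω) = ((-(ω.val * x.val : ℕ) : ℤ) : ZMod N) := by
    push_cast
    rw [ZMod.natCast_val, ZMod.natCast_val, ZMod.cast_id, ZMod.cast_id]
    ring
  rw [hx, ZMod.stdAddChar_coe]
  congr 1
  push_cast
  ring

theorem stmt0 {N : ℕ} [NeZero N] (f : ZMod N → ℂ) (E S : Finset (ZMod N))
    (hfE : ∀ x, f x ≠ 0 → x ∈ E)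
    (hES : (E.card : ℝ) * S.card < N / 2)
    (h : ZMod N → ℂ) (hh : h ≠ 0)
    (hhS : ∀ ω, dft h ω ≠ 0 → ω ∈ S) :
    l1 E h < l1 Eᶜ h := by
  have hN : (0 : ℝ) < N := Nat.cast_pos.mpr (Nat.pos_of_ne_zero (NeZero.ne N))
  have hsqrt : (Real.sqrt N : ℂ) ≠ 0 := by
    simp only [ne_eq, Complex.ofReal_eq_zero]
    positivity
  set F := ZMod.dft h with hF
  set L : ℝ := ∑ x : ZMod N, ‖h x‖ with hL
  -- F vanishes off S
  have hFS : ∀ ω, ω ∉ S → F ω = 0 := by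
    intro ω hω
    by_contra hne
    exact hω (hhS ω (by
      rw [dft_eq_zmod_dft]
      exact mul_ne_zero (inv_ne_zero hsqrt) hne))
  -- |F ω| ≤ L
  have hFbound : ∀ ω, ‖F ω‖ ≤ L := by
    intro ω
    rw [hF, ZMod.dft_apply]
    calc ‖∑ j : ZMod N, ZMod.stdAddChar (-(j * ω)) • h j‖
        ≤ ∑ j : ZMod N, ‖ZMod.stdAddChar (-(j * ω)) • h j‖ := by
          exact norm_sum_le _ _
      _ = L := by
          refine Finset.sum_congr rfl fun j _ => ?_
          rw [smul_eq_mul, norm_mul, ZMod.stdAddChar_apply, Circle.norm_coe, one_mul]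
  -- inversion bound: |h x| ≤ |S| * L / N
  have hinv : ∀ x, ‖h x‖ ≤ (S.card : ℝ) * L / N := by
    intro x
    have hx : h x = (N : ℂ)⁻¹ • ∑ ω : ZMod N, ZMod.stdAddChar (ω * x) • F ω := by
      have := ZMod.invDFT_apply (N := N) F x
      rw [hF] at this ⊢
      rw [← this, LinearEquiv.symm_apply_apply]
    rw [hx]
    rw [smul_eq_mul, norm_mul, norm_inv, Complex.norm_natCast]
    have hb : ‖∑ ω : ZMod N, ZMod.stdAddChar (ω * x) • F ω‖ ≤ (S.card : ℝ) * L :=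
      calc ‖∑ ω : ZMod N, ZMod.stdAddChar (ω * x) • F ω‖
        ≤ ∑ ω : ZMod N, ‖ZMod.stdAddChar (ω * x) • F ω‖ :=
          norm_sum_le _ _
      _ = ∑ ω : ZMod N, ‖F ω‖ := by
          refine Finset.sum_congr rfl fun ω _ => ?_
          rw [smul_eq_mul, norm_mul, ZMod.stdAddChar_apply, Circle.norm_coe, one_mul]
      _ = ∑ ω ∈ S, ‖F ω‖ := by
          rw [← Finset.sum_subset (Finset.subset_univ S)]
          intro ω _ hω
          rw [hFS ω hω, norm_zero]
      _ ≤ ∑ _ω ∈ S, L := Finset.sum_le_sum fun ω _ => hFbound ω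
      _ = S.card * L := by rw [Finset.sum_const, nsmul_eq_mul]
    calc (N : ℝ)⁻¹ * ‖∑ ω : ZMod N, ZMod.stdAddChar (ω * x) • F ω‖
        ≤ (N : ℝ)⁻¹ * ((S.card : ℝ) * L) := mul_le_mul_of_nonneg_left hb (by positivity)
      _ = (S.card : ℝ) * L / N := by ring
  -- L > 0
  have hLpos : 0 < L := by
    obtain ⟨x, hx⟩ := Function.ne_iff.mp hh
    have : 0 < ‖h x‖ := by simpa using hx
    refine lt_of_lt_of_le this ?_
    exact Finset.single_le_sum (fun i _ => norm_nonneg _) (Finset.mem_univ x)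
  -- split L
  have hsplit : l1 E h + l1 Eᶜ h = L := by
    rw [l1, l1, hL, ← Finset.sum_add_sum_compl E]
  -- bound l1 E h
  have hbound : l1 E h ≤ (E.card : ℝ) * ((S.card : ℝ) * L / N) := by
    rw [l1]
    calc ∑ x ∈ E, ‖h x‖ ≤ ∑ _x ∈ E, (S.card : ℝ) * L / N :=
          Finset.sum_le_sum fun x _ => hinv x
      _ = E.card * ((S.card : ℝ) * L / N) := by rw [Finset.sum_const, nsmul_eq_mul]
  have hhalf : (E.card : ℝ) * ((S.card : ℝ) * L / N) < L / 2 := by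
    rw [mul_div_assoc', div_lt_div_iff₀ hN (by norm_num : (0:ℝ) < 2)]
    calc (E.card : ℝ) * ((S.card : ℝ) * L) * 2 = ((E.card : ℝ) * S.card) * (2 * L) := by ring
      _ < (N / 2) * (2 * L) := by
          apply mul_lt_mul_of_pos_right hES (by positivity)
      _ = L * N := by ring
  have : l1 E h < L / 2 := lt_of_le_of_lt hbound hhalf
  linarith
end

section
/- (Donoho–Stark exact recovery) Let f: Z_N → C be supported on E ⊆ Z_N and let S ⊆ Z_N with |E|·|S| < N/2. If g: Z_N → C satisfies ĝ(m) = f̂(m) for all m ∉ S and ||g||_{L^1(Z_N)} ≤ ||f||_{L^1(Z_N)}, then g = f. -/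
open Finset

lemma dft_eq_zdft {N : ℕ} [NeZero N] (u : ZMod N → ℂ) (ω : ZMod N) :
    dft u ω = (Real.sqrt N : ℂ)⁻¹ * ZMod.dft u ω := by
  rw [dft, ZMod.dft_apply]
  congr 1
  refine Finset.sum_congr rfl fun x _ => ?_
  rw [smul_eq_mul, mul_comm]
  congr 1
  have : (-(x * ω) : ZMod N) = ((-(x.val * ω.val : ℤ) : ℤ) : ZMod N) := by
    push_cast [ZMod.natCast_val]
    simp [ZMod.natCast_val, ZMod.intCast_zmod_cast]
  rw [this, ZMod.stdAddChar_coe]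
  congr 1
  push_cast
  ring

/-- Donoho–Stark exact recovery. -/
theorem stmt2 {N : ℕ} [NeZero N] (f g : ZMod N → ℂ) (E S : Finset (ZMod N))
    (hfE : ∀ x, f x ≠ 0 → x ∈ E)
    (hES : (E.card : ℝ) * S.card < N / 2)
    (hagree : ∀ m ∉ S, dft g m = dft f m)
    (hmin : l1 univ g ≤ l1 univ f) :
    g = f := by
  have hN : (0 : ℝ) < N := Nat.cast_pos.mpr (Nat.pos_of_ne_zero (NeZero.ne N))
  set h : ZMod N → ℂ := fun x => g x - f x with hh
  -- Fourier transform of h vanishes off S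
  have hS0 : ∀ m ∉ S, ZMod.dft h m = 0 := by
    intro m hm
    have hsqrt : ((Real.sqrt N : ℂ))⁻¹ ≠ 0 := by
      simpa [Real.sqrt_eq_zero', Complex.ofReal_eq_zero, not_le, hN] using (NeZero.ne N)
    have := hagree m hm
    rw [dft_eq_zdft, dft_eq_zdft] at this
    have h2 : ZMod.dft g m = ZMod.dft f m := mul_left_cancel₀ hsqrt this
    have : h = g - f := rfl
    rw [this, map_sub]
    simp [h2]
  -- total l1 mass of h
  set T : ℝ := ∑ x : ZMod N, ‖h x‖ with hT
  have hT0 : 0 ≤ T := Finset.sum_nonneg fun x _ => norm_nonneg _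
  -- DFT bound: |𝓕 h j| ≤ T
  have hdftbd : ∀ j : ZMod N, ‖ZMod.dft h j‖ ≤ T := by
    intro j
    rw [ZMod.dft_apply]
    refine le_trans (norm_sum_le _ _) ?_
    refine Finset.sum_le_sum fun x _ => ?_
    rw [smul_eq_mul, norm_mul, ZMod.stdAddChar_apply, Circle.norm_coe, one_mul]
  -- pointwise bound from inversion
  have hptbd : ∀ x : ZMod N, ‖h x‖ ≤ (S.card : ℝ) / N * T := by
    intro x
    have hinv : h x = (N : ℂ)⁻¹ • ∑ j : ZMod N, ZMod.stdAddChar (j * x) • ZMod.dft h j := by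
      have := congrFun ((ZMod.dft (E := ℂ)).symm_apply_apply h) x
      rw [ZMod.invDFT_apply] at this
      exact this.symm
    have hres : ∑ j : ZMod N, ZMod.stdAddChar (j * x) • ZMod.dft h j
        = ∑ j ∈ S, ZMod.stdAddChar (j * x) • ZMod.dft h j := by
      symm
      refine Finset.sum_subset (Finset.subset_univ S) fun j _ hj => ?_
      rw [hS0 j hj, smul_zero]
    rw [hinv, hres, smul_eq_mul, norm_mul]
    have : ‖(N : ℂ)⁻¹‖ = (N : ℝ)⁻¹ := by
      rw [norm_inv]
      simp
    rw [this]
    have hsum : ‖∑ j ∈ S, ZMod.stdAddChar (j * x) • ZMod.dft h j‖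
        ≤ (S.card : ℝ) * T := by
      refine le_trans (norm_sum_le _ _) ?_
      calc ∑ j ∈ S, ‖ZMod.stdAddChar (j * x) • ZMod.dft h j‖
          ≤ ∑ _j ∈ S, T := by
            refine Finset.sum_le_sum fun j _ => ?_
            rw [smul_eq_mul, norm_mul, ZMod.stdAddChar_apply, Circle.norm_coe, one_mul]
            exact hdftbd j
        _ = (S.card : ℝ) * T := by rw [Finset.sum_const, nsmul_eq_mul]
    calc (N : ℝ)⁻¹ * ‖∑ j ∈ S, ZMod.stdAddChar (j * x) • ZMod.dft h j‖
        ≤ (N : ℝ)⁻¹ * ((S.card : ℝ) * T) := by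
          exact mul_le_mul_of_nonneg_left hsum (by positivity)
      _ = (S.card : ℝ) / N * T := by ring
  -- split mass of h over E and its complement
  have hsplit : T = (∑ x ∈ E, ‖h x‖) + ∑ x ∈ Eᶜ, ‖h x‖ := by
    rw [hT, ← Finset.sum_add_sum_compl E]
  -- f vanishes off E
  have hfc : ∀ x ∈ Eᶜ, f x = 0 := by
    intro x hx
    by_contra hfx
    exact (Finset.mem_compl.mp hx) (hfE x hfx)
  -- minimality gives: mass off E ≤ mass on E
  have hmass : ∑ x ∈ Eᶜ, ‖h x‖ ≤ ∑ x ∈ E, ‖h x‖ := by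
    have e1 : l1 univ g = (∑ x ∈ E, ‖g x‖) + ∑ x ∈ Eᶜ, ‖h x‖ := by
      rw [l1, ← Finset.sum_add_sum_compl E]
      congr 1
      refine Finset.sum_congr rfl fun x hx => ?_
      rw [hh]
      simp [hfc x hx]
    have e2 : l1 univ f = ∑ x ∈ E, ‖f x‖ := by
      rw [l1, ← Finset.sum_add_sum_compl E]
      have : ∑ x ∈ Eᶜ, ‖f x‖ = 0 := by
        refine Finset.sum_eq_zero fun x hx => by simp [hfc x hx]
      rw [this, add_zero]
    have e3 : ∑ x ∈ E, ‖f x‖ - ∑ x ∈ E, ‖h x‖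
        ≤ ∑ x ∈ E, ‖g x‖ := by
      rw [← Finset.sum_sub_distrib]
      refine Finset.sum_le_sum fun x _ => ?_
      have := norm_add_le (f x - g x) (g x)
      rw [sub_add_cancel] at this
      have h2 : ‖f x - g x‖ = ‖h x‖ := by
        rw [hh]; simp [← norm_neg (g x - f x), neg_sub]
      linarith
    rw [e1, e2] at hmin
    linarith
  -- combine
  have hTbd : T ≤ 2 * (E.card : ℝ) * ((S.card : ℝ) / N * T) := by
    have : ∑ x ∈ E, ‖h x‖ ≤ (E.card : ℝ) * ((S.card : ℝ) / N * T) := by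
      calc ∑ x ∈ E, ‖h x‖ ≤ ∑ _x ∈ E, (S.card : ℝ) / N * T :=
            Finset.sum_le_sum fun x _ => hptbd x
        _ = (E.card : ℝ) * ((S.card : ℝ) / N * T) := by rw [Finset.sum_const, nsmul_eq_mul]
    linarith [hsplit, hmass]
  have hTzero : T = 0 := by
    by_contra hne
    have hTpos : 0 < T := lt_of_le_of_ne hT0 (Ne.symm hne)
    have hTbd' : T * N ≤ 2 * (E.card : ℝ) * ((S.card : ℝ) * T) := by
      calc T * N ≤ (2 * (E.card : ℝ) * ((S.card : ℝ) / N * T)) * N :=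
            mul_le_mul_of_nonneg_right hTbd hN.le
        _ = 2 * (E.card : ℝ) * ((S.card : ℝ) * T) := by field_simp
    nlinarith [mul_lt_mul_of_pos_right hES hTpos]
  -- conclude h = 0
  funext x
  have : ‖h x‖ = 0 := by
    have h1 : ‖h x‖ ≤ T := by
      rw [hT]
      exact Finset.single_le_sum (fun y _ => norm_nonneg (h y)) (Finset.mem_univ x)
    have := norm_nonneg (h x)
    linarith
  have : h x = 0 := by simpa using this
  exact sub_eq_zero.mp this
end

section
/- (Noisy loose Logan bound) Let f: Z_N → C, M, S ⊆ Z_N, with ||f̂||_{L^1(S^c)} ≤ (ε/N)||f̂||_{L^1(Z_N)}. Set δ = |M||S|/N < 1/2 and δ' = |M^c||S|/N, and let α ≥ 0. Suppose g: Z_N → C satisfies ||f − g||_{L^1(M^c)} ≤ α·||f||_{L^1(M^c)} and ||ĝ||_{L^1(Z_N)} ≤ ||f̂||_{L^1(Z_N)}. Then h = f − g satisfies ||ĥ||_{L^1(Z_N)} ≤ (1/N)·(2ε + 2Nαδ')/(1 − 2δ)·||f̂||_{L^1(Z_N)}. -/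
open Finset

lemma dft_eq_std {N : ℕ} [NeZero N] (f : ZMod N → ℂ) (ω : ZMod N) :
    dft f ω = (Real.sqrt N : ℂ)⁻¹ * ∑ x : ZMod N, ZMod.stdAddChar (-(x * ω)) * f x := by
  unfold dft
  congr 1
  refine Finset.sum_congr rfl fun x _ => ?_
  have h1 : (-(x * ω)) = ((-(ω.val * x.val : ℤ) : ℤ) : ZMod N) := by
    push_cast [ZMod.natCast_val, ZMod.intCast_zmod_cast]
    ring
  rw [h1, ZMod.stdAddChar_apply, ZMod.toCircle_intCast]
  rw [mul_comm]
  congr 1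
  push_cast
  ring

lemma sqrtN_pos {N : ℕ} [NeZero N] : 0 < Real.sqrt N :=
  Real.sqrt_pos.2 (by exact_mod_cast Nat.pos_of_ne_zero (NeZero.ne N))

lemma fwd_bound {N : ℕ} [NeZero N] (u : ZMod N → ℂ) (ω : ZMod N) :
    ‖dft u ω‖ ≤ (Real.sqrt N)⁻¹ * l1 univ u := by
  rw [dft_eq_std, norm_mul]
  have h1 : ‖((Real.sqrt N : ℂ)⁻¹)‖ = (Real.sqrt N)⁻¹ := by
    rw [norm_inv, Complex.norm_real, Real.norm_of_nonneg (Real.sqrt_nonneg _)]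
  rw [h1]
  refine mul_le_mul_of_nonneg_left ?_ (by positivity)
  refine (norm_sum_le _ _).trans ?_
  unfold l1
  refine Finset.sum_le_sum fun x _ => ?_
  rw [norm_mul, ZMod.stdAddChar_apply, Circle.norm_coe, one_mul]

lemma std_dft_eq {N : ℕ} [NeZero N] (u : ZMod N → ℂ) (j : ZMod N) :
    ZMod.dft u j = (Real.sqrt N : ℂ) * dft u j := by
  rw [dft_eq_std, ← mul_assoc, mul_inv_cancel₀ (by
    exact_mod_cast ne_of_gt (sqrtN_pos (N := N))), one_mul, ZMod.dft_apply]
  simp [smul_eq_mul]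

lemma inv_bound {N : ℕ} [NeZero N] (u : ZMod N → ℂ) (x : ZMod N) :
    ‖u x‖ ≤ (Real.sqrt N)⁻¹ * l1 univ (dft u) := by
  have hinv : u x = (N : ℂ)⁻¹ • ∑ j : ZMod N, ZMod.stdAddChar (j * x) • ZMod.dft u j := by
    conv_lhs => rw [← (ZMod.dft (E := ℂ) (N := N)).symm_apply_apply u]
    rw [ZMod.invDFT_apply]
  rw [hinv]
  have hN : (0:ℝ) < N := by exact_mod_cast Nat.pos_of_ne_zero (NeZero.ne N)
  rw [smul_eq_mul, norm_mul, norm_inv, Complex.norm_natCast]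
  have : ‖(∑ j : ZMod N, ZMod.stdAddChar (j * x) • ZMod.dft u j)‖
      ≤ Real.sqrt N * l1 univ (dft u) := by
    refine (norm_sum_le _ _).trans ?_
    unfold l1
    rw [Finset.mul_sum]
    refine Finset.sum_le_sum fun j _ => ?_
    rw [smul_eq_mul, norm_mul, ZMod.stdAddChar_apply, Circle.norm_coe, one_mul, std_dft_eq,
      norm_mul]
    have : ‖(Real.sqrt N : ℂ)‖ = Real.sqrt N := by
      rw [Complex.norm_real, Real.norm_of_nonneg (Real.sqrt_nonneg _)]
    rw [this]
  calc (N:ℝ)⁻¹ * ‖(∑ j : ZMod N, ZMod.stdAddChar (j * x) • ZMod.dft u j)‖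
      ≤ (N:ℝ)⁻¹ * (Real.sqrt N * l1 univ (dft u)) := by
        exact mul_le_mul_of_nonneg_left this (by positivity)
    _ = (Real.sqrt N)⁻¹ * l1 univ (dft u) := by
        have h2 : (N:ℝ)⁻¹ = (Real.sqrt N)⁻¹ * (Real.sqrt N)⁻¹ := by
          rw [← mul_inv, Real.mul_self_sqrt hN.le]
        rw [h2, mul_assoc, inv_mul_cancel_left₀ (ne_of_gt (sqrtN_pos (N := N)))]

lemma dft_sub {N : ℕ} [NeZero N] (f g : ZMod N → ℂ) (ω : ZMod N) :
    dft (f - g) ω = dft f ω - dft g ω := by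
  unfold dft
  rw [← mul_sub, ← Finset.sum_sub_distrib]
  congr 1
  refine Finset.sum_congr rfl fun x _ => ?_
  simp [Pi.sub_apply, sub_mul]

lemma l1_split {N : ℕ} [NeZero N] (A : Finset (ZMod N)) (u : ZMod N → ℂ) :
    l1 univ u = l1 A u + l1 Aᶜ u := by
  unfold l1
  exact (Finset.sum_add_sum_compl A _).symm

/-- Noisy loose Logan bound. -/
theorem stmt7 {N : ℕ} [NeZero N] (f g : ZMod N → ℂ) (M S : Finset (ZMod N))
    (ε α : ℝ) (hε : 0 ≤ ε) (hα : 0 ≤ α)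
    (hconc : l1 Sᶜ (dft f) ≤ ε / N * l1 univ (dft f))
    (hδ : (M.card : ℝ) * S.card / N < 1 / 2)
    (hnoise : l1 Mᶜ (f - g) ≤ α * l1 Mᶜ f)
    (hmin : l1 univ (dft g) ≤ l1 univ (dft f)) :
    l1 univ (dft (f - g)) ≤
      (1 / N) * (2 * ε + 2 * N * α * ((Mᶜ.card : ℝ) * S.card / N)) /
        (1 - 2 * ((M.card : ℝ) * S.card / N)) * l1 univ (dft f) := by
  have hN : (0:ℝ) < N := by exact_mod_cast Nat.pos_of_ne_zero (NeZero.ne N)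
  set F := l1 univ (dft f) with hF
  set H := l1 univ (dft (f - g)) with hH
  -- triangle inequality on Sᶜ
  have B : l1 Sᶜ (dft (f - g)) ≤ l1 Sᶜ (dft f) + l1 Sᶜ (dft g) := by
    unfold l1
    rw [← Finset.sum_add_distrib]
    refine Finset.sum_le_sum fun x _ => ?_
    rw [dft_sub]
    simpa [sub_eq_add_neg] using norm_add_le (dft f x) (-(dft g x))
  -- reverse triangle on S
  have C : l1 S (dft f) ≤ l1 S (dft g) + l1 S (dft (f - g)) := by
    unfold l1
    rw [← Finset.sum_add_distrib]
    refine Finset.sum_le_sum fun x _ => ?_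
    rw [dft_sub]
    simpa using norm_add_le (dft g x) (dft f x - dft g x)
  have hsplitH : H = l1 S (dft (f - g)) + l1 Sᶜ (dft (f - g)) := l1_split S _
  have hsplitF : F = l1 S (dft f) + l1 Sᶜ (dft f) := l1_split S _
  have hsplitG : l1 univ (dft g) = l1 S (dft g) + l1 Sᶜ (dft g) := l1_split S _
  have gSc_nonneg : 0 ≤ l1 Sᶜ (dft g) := Finset.sum_nonneg fun _ _ => norm_nonneg _
  have step1 : H ≤ 2 * l1 S (dft (f - g)) + 2 * (ε / N * F) := by linarith
  -- forward bound on the S-part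
  have A1 : l1 S (dft (f - g)) ≤
      (S.card : ℝ) * ((Real.sqrt N)⁻¹ * l1 univ (f - g)) := by
    have := Finset.sum_le_card_nsmul S (fun x => ‖dft (f - g) x‖)
      ((Real.sqrt N)⁻¹ * l1 univ (f - g)) (fun x _ => fwd_bound (f - g) x)
    simpa [l1, nsmul_eq_mul] using this
  have A4 : l1 univ (f - g) = l1 M (f - g) + l1 Mᶜ (f - g) := l1_split M _
  have A2 : l1 M (f - g) ≤ (M.card : ℝ) * ((Real.sqrt N)⁻¹ * H) := by
    have := Finset.sum_le_card_nsmul M (fun x => ‖(f - g) x‖)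
      ((Real.sqrt N)⁻¹ * H) (fun x _ => inv_bound (f - g) x)
    simpa [l1, nsmul_eq_mul] using this
  have A3 : l1 Mᶜ f ≤ (Mᶜ.card : ℝ) * ((Real.sqrt N)⁻¹ * F) := by
    have := Finset.sum_le_card_nsmul Mᶜ (fun x => ‖f x‖)
      ((Real.sqrt N)⁻¹ * F) (fun x _ => inv_bound f x)
    simpa [l1, nsmul_eq_mul] using this
  have step4 : l1 Mᶜ (f - g) ≤ α * ((Mᶜ.card : ℝ) * ((Real.sqrt N)⁻¹ * F)) :=
    hnoise.trans (mul_le_mul_of_nonneg_left A3 hα)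
  have step5 : l1 S (dft (f - g)) ≤
      (S.card : ℝ) * ((Real.sqrt N)⁻¹ *
        ((M.card : ℝ) * ((Real.sqrt N)⁻¹ * H) +
          α * ((Mᶜ.card : ℝ) * ((Real.sqrt N)⁻¹ * F)))) := by
    refine A1.trans ?_
    gcongr
    linarith
  have hsq : (Real.sqrt N)⁻¹ * (Real.sqrt N)⁻¹ = (N:ℝ)⁻¹ := by
    rw [← mul_inv, Real.mul_self_sqrt hN.le]
  have step6 : (S.card : ℝ) * ((Real.sqrt N)⁻¹ *
        ((M.card : ℝ) * ((Real.sqrt N)⁻¹ * H) +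
          α * ((Mᶜ.card : ℝ) * ((Real.sqrt N)⁻¹ * F))))
      = ((M.card : ℝ) * S.card / N) * H + α * (((Mᶜ.card : ℝ) * S.card / N) * F) := by
    have : (S.card : ℝ) * ((Real.sqrt N)⁻¹ *
        ((M.card : ℝ) * ((Real.sqrt N)⁻¹ * H) +
          α * ((Mᶜ.card : ℝ) * ((Real.sqrt N)⁻¹ * F))))
        = ((Real.sqrt N)⁻¹ * (Real.sqrt N)⁻¹) * ((M.card : ℝ) * S.card * H)
          + ((Real.sqrt N)⁻¹ * (Real.sqrt N)⁻¹) * (α * ((Mᶜ.card : ℝ) * S.card * F)) := by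
      ring
    rw [this, hsq]
    ring
  have key : H ≤ 2 * (ε / N * F) + 2 * (((M.card : ℝ) * S.card / N) * H)
      + 2 * (α * (((Mᶜ.card : ℝ) * S.card / N) * F)) := by
    have := step5
    rw [step6] at this
    linarith
  have hpos : 0 < 1 - 2 * ((M.card : ℝ) * S.card / N) := by linarith
  rw [div_mul_eq_mul_div, le_div_iff₀ hpos]
  have hconst : (1 / (N:ℝ)) * (2 * ε + 2 * N * α * ((Mᶜ.card : ℝ) * S.card / N))
      = 2 * (ε / N) + 2 * (α * ((Mᶜ.card : ℝ) * S.card / N)) := by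
    field_simp
  rw [hconst]
  ring_nf at key ⊢
  linarith [key]
end

section
/- (Hoeffding for random subsets via binomial conditioning) Let f: Z_N → C and let M be a random subset of Z_N where each element is included independently with probability p ∈ (0,1). Then for every t > 0, Pr( | (1/|M|) Σ_{x∈M} |f(x)| − (1/N) Σ_{x∈Z_N} |f(x)| | ≥ t ) ≤ 2·(1 − p + p·exp(−2t²/||f||_∞²))^N, with the convention that the event is measured only on {|M| ≥ 1}. -/
open Finset

lemma hoeff_core (s : ℝ) (hs0 : 0 ≤ s) (hs1 : s ≤ 1) {h : ℝ} (hh : 0 ≤ h) :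
    1 - s + s * Real.exp h ≤ Real.exp (s * h + h ^ 2 / 8) := by
  set E : ℝ → ℝ := fun x => 1 - s + s * Real.exp x with hEdef
  have hEpos : ∀ x ∈ Set.Ici (0:ℝ), 0 < E x := by
    intro x hx
    have h1 : (1:ℝ) ≤ Real.exp x := Real.one_le_exp hx
    simp only [hEdef]
    nlinarith
  have hEderiv : ∀ x, HasDerivAt E (s * Real.exp x) x := by
    intro x
    exact ((Real.hasDerivAt_exp x).const_mul s).const_add (1 - s)
  set φ : ℝ → ℝ := fun x => s * x + x ^ 2 / 8 - Real.log (E x) with hφdef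
  set ψ : ℝ → ℝ := fun x => s + x / 4 - s * Real.exp x / E x with hψdef
  have hφderiv : ∀ x, E x ≠ 0 → HasDerivAt φ (ψ x) x := by
    intro x hx
    have h1 : HasDerivAt (fun y : ℝ => s * y + y ^ 2 / 8) (s + x / 4) x := by
      have := ((hasDerivAt_pow 2 x).div_const 8).const_add 0
      have h2 : HasDerivAt (fun y : ℝ => s * y) s x := by
        simpa using (hasDerivAt_id x).const_mul s
      have h3 : HasDerivAt (fun y : ℝ => y ^ 2 / 8) (x / 4) x := by
        have := (hasDerivAt_pow 2 x).div_const 8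
        exact this.congr_deriv (by push_cast; ring)
      exact h2.add h3
    have h4 : HasDerivAt (fun y => Real.log (E y)) (s * Real.exp x / E x) x :=
      (hEderiv x).log hx
    exact h1.sub h4
  have hψderiv : ∀ x, E x ≠ 0 →
      HasDerivAt ψ (1 / 4 - (s * Real.exp x * E x - s * Real.exp x * (s * Real.exp x)) / (E x) ^ 2) x := by
    intro x hx
    have h1 : HasDerivAt (fun y : ℝ => s + y / 4) (1 / 4) x := by
      simpa using ((hasDerivAt_id x).div_const 4).const_add s
    have h2 : HasDerivAt (fun y => s * Real.exp y / E y)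
        ((s * Real.exp x * E x - s * Real.exp x * (s * Real.exp x)) / (E x) ^ 2) x :=
      ((Real.hasDerivAt_exp x).const_mul s).div (hEderiv x) hx
    exact h1.sub h2
  have hψmono : MonotoneOn ψ (Set.Ici (0:ℝ)) := by
    apply monotoneOn_of_deriv_nonneg (convex_Ici 0)
    · intro x hx
      exact (hψderiv x (ne_of_gt (hEpos x hx))).continuousAt.continuousWithinAt
    · intro x hx
      rw [interior_Ici] at hx
      exact ((hψderiv x (ne_of_gt (hEpos x (Set.mem_Ici.mpr (le_of_lt hx))))).differentiableAt).differentiableWithinAt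
    · intro x hx
      rw [interior_Ici] at hx
      have hEx : 0 < E x := hEpos x (Set.mem_Ici.mpr (le_of_lt hx))
      rw [(hψderiv x (ne_of_gt hEx)).deriv]
      have hex : 0 < Real.exp x := Real.exp_pos x
      have hEx' : 0 < 1 - s + s * Real.exp x := hEx
      simp only [hEdef]
      rw [sub_nonneg, div_le_iff₀ (pow_pos hEx' 2)]
      nlinarith [sq_nonneg (1 - s - s * Real.exp x)]
  have hψ0 : ψ 0 = 0 := by
    simp [hψdef, hEdef, Real.exp_zero]
  have hψnonneg : ∀ x ∈ Set.Ici (0:ℝ), 0 ≤ ψ x := by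
    intro x hx
    rw [← hψ0]
    exact hψmono (Set.self_mem_Ici) hx hx
  have hφmono : MonotoneOn φ (Set.Ici (0:ℝ)) := by
    apply monotoneOn_of_deriv_nonneg (convex_Ici 0)
    · intro x hx
      exact (hφderiv x (ne_of_gt (hEpos x hx))).continuousAt.continuousWithinAt
    · intro x hx
      rw [interior_Ici] at hx
      exact ((hφderiv x (ne_of_gt (hEpos x (Set.mem_Ici.mpr (le_of_lt hx))))).differentiableAt).differentiableWithinAt
    · intro x hx
      rw [interior_Ici] at hx
      rw [(hφderiv x (ne_of_gt (hEpos x (Set.mem_Ici.mpr (le_of_lt hx))))).deriv]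
      exact hψnonneg x (Set.mem_Ici.mpr (le_of_lt hx))
  have hφ0 : φ 0 = 0 := by
    simp [hφdef, hEdef, Real.exp_zero]
  have hφh : 0 ≤ φ h := by
    rw [← hφ0]
    exact hφmono (Set.self_mem_Ici) hh hh
  have hEh : 0 < E h := hEpos h hh
  have hlog : Real.log (E h) ≤ s * h + h ^ 2 / 8 := by
    simp only [hφdef] at hφh
    linarith
  calc 1 - s + s * Real.exp h = E h := rfl
    _ = Real.exp (Real.log (E h)) := (Real.exp_log hEh).symm
    _ ≤ Real.exp (s * h + h ^ 2 / 8) := Real.exp_le_exp.mpr hlog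

lemma amgm_fin {ι : Type*} [Fintype ι] (v : ι → ℝ) (hv : ∀ i, 0 ≤ v i) :
    ∏ i, v i ≤ ((∑ i, v i) / (Fintype.card ι : ℝ)) ^ (Fintype.card ι) := by
  rcases Nat.eq_zero_or_pos (Fintype.card ι) with hn | hn
  · have : IsEmpty ι := Fintype.card_eq_zero_iff.mp hn
    simp [hn]
  · set n := Fintype.card ι with hndef
    have hnR : 0 < (n : ℝ) := by exact_mod_cast hn
    have hw : ∑ _i : ι, ((n : ℝ))⁻¹ = 1 := by
      rw [Finset.sum_const, Finset.card_univ, ← hndef, nsmul_eq_mul]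
      field_simp
    have h1 : ∏ i, (v i) ^ ((n : ℝ))⁻¹ ≤ ∑ i, ((n : ℝ))⁻¹ * v i :=
      Real.geom_mean_le_arith_mean_weighted univ _ v (fun i _ => by positivity) hw
        (fun i _ => hv i)
    have h2 : ∑ i, ((n : ℝ))⁻¹ * v i = (∑ i, v i) / (n : ℝ) := by
      rw [← Finset.mul_sum]; ring
    have h3 : (∏ i, (v i) ^ ((n : ℝ))⁻¹) ^ (n : ℕ) = ∏ i, v i := by
      rw [← Finset.prod_pow]
      apply Finset.prod_congr rfl
      intro i _
      rw [← Real.rpow_natCast ((v i) ^ ((n:ℝ))⁻¹) n, ← Real.rpow_mul (hv i)]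
      simp [inv_mul_cancel₀ (ne_of_gt hnR)]
    calc ∏ i, v i = (∏ i, (v i) ^ ((n : ℝ))⁻¹) ^ (n : ℕ) := h3.symm
      _ ≤ ((∑ i, v i) / (n : ℝ)) ^ (n : ℕ) := by
          apply pow_le_pow_left₀ (Finset.prod_nonneg fun i _ => Real.rpow_nonneg (hv i) _)
          rw [← h2]; exact h1

lemma mgf_bound {ι : Type*} [Fintype ι] [Nonempty ι] (b : ι → ℝ) (A c lam : ℝ)
    (hsum : ∑ x, b x = 0) (hlb : ∀ x, A ≤ b x) (hub : ∀ x, b x ≤ A + c)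
    (hlam : 0 ≤ lam) :
    ∑ x, Real.exp (lam * b x) ≤ (Fintype.card ι : ℝ) * Real.exp (lam ^ 2 * c ^ 2 / 8) := by
  set n := Fintype.card ι with hndef
  have hn : 0 < n := Fintype.card_pos
  have hnR : 0 < (n : ℝ) := by exact_mod_cast hn
  obtain ⟨x0⟩ := ‹Nonempty ι›
  have hc0 : 0 ≤ c := by have := hlb x0; have := hub x0; linarith
  have hsum_const : ∀ r : ℝ, ∑ _x : ι, r = (n : ℝ) * r := by
    intro r; rw [Finset.sum_const, Finset.card_univ, ← hndef, nsmul_eq_mul]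
  rcases eq_or_lt_of_le hc0 with hc | hc
  · -- c = 0 : all b x = A, and A = 0
    have hbA : ∀ x, b x = A := fun x => le_antisymm (by simpa [← hc] using hub x) (hlb x)
    have hA : A = 0 := by
      have : ∑ x, b x = (n : ℝ) * A := by
        rw [Finset.sum_congr rfl fun x _ => hbA x]; exact hsum_const A
      rw [hsum] at this
      exact ((mul_eq_zero.mp this.symm).resolve_left (ne_of_gt hnR))
    have : ∀ x : ι, Real.exp (lam * b x) = 1 := by
      intro x; rw [hbA, hA]; simp
    rw [Finset.sum_congr rfl fun x _ => this x, hsum_const 1, ← hc]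
    simp
  · -- c > 0
    have hA0 : A ≤ 0 := by
      have h1 : (n : ℝ) * A ≤ ∑ x, b x := by
        rw [← hsum_const A]; exact Finset.sum_le_sum fun x _ => hlb x
      rw [hsum] at h1; nlinarith
    have hB0 : 0 ≤ A + c := by
      have h1 : ∑ x, b x ≤ (n : ℝ) * (A + c) := by
        rw [← hsum_const (A + c)]; exact Finset.sum_le_sum fun x _ => hub x
      rw [hsum] at h1; nlinarith
    set s : ℝ := -A / c with hsdef
    have hs0 : 0 ≤ s := div_nonneg (by linarith) hc0
    have hs1 : s ≤ 1 := by rw [hsdef, div_le_one hc]; linarith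
    have hAc : A = -(s * c) := by rw [hsdef]; field_simp
    -- pointwise convexity bound
    have hpt : ∀ x : ι, Real.exp (lam * b x) ≤
        (A + c - b x) / c * Real.exp (lam * A) + (b x - A) / c * Real.exp (lam * (A + c)) := by
      intro x
      have hθ1 : 0 ≤ (A + c - b x) / c := div_nonneg (by linarith [hub x]) hc0
      have hθ2 : 0 ≤ (b x - A) / c := div_nonneg (by linarith [hlb x]) hc0
      have hθs : (A + c - b x) / c + (b x - A) / c = 1 := by field_simp; ring
      have := convexOn_exp.2 (Set.mem_univ (lam * A)) (Set.mem_univ (lam * (A + c)))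
        hθ1 hθ2 hθs
      simp only [smul_eq_mul] at this
      have harg : (A + c - b x) / c * (lam * A) + (b x - A) / c * (lam * (A + c)) = lam * b x := by
        field_simp
        ring
      rwa [harg] at this
    have hsum2 : ∑ x, ((A + c - b x) / c * Real.exp (lam * A) + (b x - A) / c * Real.exp (lam * (A + c)))
        = (n : ℝ) * ((1 - s) * Real.exp (lam * A) + s * Real.exp (lam * (A + c))) := by
      rw [Finset.sum_add_distrib]
      simp only [div_mul_eq_mul_div, ← Finset.sum_div, ← Finset.sum_mul,
        Finset.sum_sub_distrib]
      rw [hsum, hsum_const (A + c), hsum_const A]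
      rw [hAc]
      field_simp
      ring
    have hkey : (1 - s) * Real.exp (lam * A) + s * Real.exp (lam * (A + c))
        ≤ Real.exp (lam ^ 2 * c ^ 2 / 8) := by
      have hh : 0 ≤ lam * c := mul_nonneg hlam hc0
      have h1 := hoeff_core s hs0 hs1 hh
      have e1 : lam * A = -(s * (lam * c)) := by rw [hAc]; ring
      have e2 : lam * (A + c) = -(s * (lam * c)) + lam * c := by rw [hAc]; ring
      rw [e1, e2, Real.exp_add]
      calc (1 - s) * Real.exp (-(s * (lam * c)))
            + s * (Real.exp (-(s * (lam * c))) * Real.exp (lam * c))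
          = Real.exp (-(s * (lam * c))) * (1 - s + s * Real.exp (lam * c)) := by ring
        _ ≤ Real.exp (-(s * (lam * c))) * Real.exp (s * (lam * c) + (lam * c) ^ 2 / 8) := by
            exact mul_le_mul_of_nonneg_left h1 (Real.exp_pos _).le
        _ = Real.exp (lam ^ 2 * c ^ 2 / 8) := by
            rw [← Real.exp_add]; congr 1; ring
    calc ∑ x, Real.exp (lam * b x)
        ≤ ∑ x, ((A + c - b x) / c * Real.exp (lam * A) + (b x - A) / c * Real.exp (lam * (A + c))) :=
          Finset.sum_le_sum fun x _ => hpt x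
      _ = (n : ℝ) * ((1 - s) * Real.exp (lam * A) + s * Real.exp (lam * (A + c))) := hsum2
      _ ≤ (n : ℝ) * Real.exp (lam ^ 2 * c ^ 2 / 8) := by
          exact mul_le_mul_of_nonneg_left hkey hnR.le

set_option maxHeartbeats 1000000 in
/-- Hoeffding for random subsets via binomial conditioning: each element of `ZMod N`
is included in `M` independently with probability `p`, so the probability weight of a
given subset `M` is `p^|M| (1-p)^(N-|M|)`; the event is measured only on `{|M| ≥ 1}`. -/
theorem stmt14 {N : ℕ} [NeZero N] (f : ZMod N → ℂ) (p t : ℝ)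
    (hp : p ∈ Set.Ioo (0 : ℝ) 1) (ht : 0 < t) :
    ∑ M : Finset (ZMod N),
      (if 1 ≤ M.card ∧ t ≤ |(1 / (M.card : ℝ)) * ∑ x ∈ M, ‖f x‖ -
          (1 / (N : ℝ)) * ∑ x : ZMod N, ‖f x‖|
        then p ^ M.card * (1 - p) ^ (N - M.card) else 0) ≤
      2 * (1 - p + p * Real.exp (-(2 * t ^ 2) / (⨆ x, ‖f x‖) ^ 2)) ^ N := by
  obtain ⟨hp0, hp1⟩ := hp
  have hNpos : 0 < N := Nat.pos_of_ne_zero (NeZero.ne N)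
  have hNR : 0 < (N : ℝ) := by exact_mod_cast hNpos
  have h1p : (0:ℝ) ≤ 1 - p := by linarith
  set c : ℝ := ⨆ x, ‖f x‖ with hcdef
  set μ : ℝ := 1 / (N : ℝ) * ∑ x : ZMod N, ‖f x‖ with hμdef
  have habs0 : ∀ x, 0 ≤ ‖f x‖ := fun x => norm_nonneg _
  have hac : ∀ x, ‖f x‖ ≤ c := by
    intro x
    rw [hcdef]
    exact le_ciSup (Set.Finite.bddAbove (Set.finite_range fun y => ‖f y‖)) x
  have hc0 : 0 ≤ c := le_trans (habs0 0) (hac 0)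
  rcases eq_or_lt_of_le hc0 with hc | hc
  · -- degenerate case : f ≡ 0
    have hz : ∀ x, ‖f x‖ = 0 := fun x => le_antisymm (hc ▸ hac x) (habs0 x)
    have hL : (∑ M : Finset (ZMod N),
        (if 1 ≤ M.card ∧ t ≤ |1 / (M.card : ℝ) * ∑ x ∈ M, ‖f x‖ - μ|
          then p ^ M.card * (1 - p) ^ (N - M.card) else 0)) = 0 := by
      apply Finset.sum_eq_zero
      intro M _
      rw [if_neg]
      rintro ⟨hk, hts⟩
      rw [Finset.sum_eq_zero (fun x _ => hz x)] at hts
      rw [hμdef, Finset.sum_eq_zero (fun x _ => hz x)] at hts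
      simp only [mul_zero, zero_sub, sub_zero, abs_zero, abs_neg, neg_zero] at hts
      linarith
    rw [hL]
    positivity
  · -- main case : c > 0
    set lam : ℝ := 4 * t / c ^ 2 with hlamdef
    have hlam : 0 ≤ lam := by positivity
    set q : ℝ := Real.exp (-(2 * t ^ 2) / c ^ 2) with hqdef
    set G : ZMod N → ℝ := fun x => Real.exp (lam * (‖f x‖ - μ - t)) with hGdef
    set H : ZMod N → ℝ := fun x => Real.exp (lam * (μ - t - ‖f x‖)) with hHdef
    have hexp_eq : Real.exp (-(lam * t)) * Real.exp (lam ^ 2 * c ^ 2 / 8) = q := by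
      rw [← Real.exp_add, hqdef]
      congr 1
      rw [hlamdef]
      field_simp
      ring
    have hμsum : ∑ x : ZMod N, (‖f x‖ - μ) = 0 := by
      rw [Finset.sum_sub_distrib, Finset.sum_const, Finset.card_univ, ZMod.card,
        nsmul_eq_mul, hμdef]
      field_simp
      ring
    have hGsum : ∑ x : ZMod N, G x ≤ (N : ℝ) * q := by
      have h1 : ∀ x : ZMod N, G x =
          Real.exp (-(lam * t)) * Real.exp (lam * (‖f x‖ - μ)) := by
        intro x
        rw [hGdef]
        simp only
        rw [← Real.exp_add]
        congr 1
        ring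
      rw [Finset.sum_congr rfl fun x _ => h1 x, ← Finset.mul_sum]
      have h2 := mgf_bound (fun x : ZMod N => ‖f x‖ - μ) (-μ) c lam
        hμsum (fun x => by show -μ ≤ ‖f x‖ - μ; have := habs0 x; linarith)
        (fun x => by show ‖f x‖ - μ ≤ -μ + c; have := hac x; linarith) hlam
      rw [ZMod.card] at h2
      calc Real.exp (-(lam * t)) * ∑ x : ZMod N, Real.exp (lam * (‖f x‖ - μ))
          ≤ Real.exp (-(lam * t)) * ((N:ℝ) * Real.exp (lam ^ 2 * c ^ 2 / 8)) :=
            mul_le_mul_of_nonneg_left h2 (Real.exp_pos _).le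
        _ = (N : ℝ) * q := by rw [← hexp_eq]; ring
    have hHsum : ∑ x : ZMod N, H x ≤ (N : ℝ) * q := by
      have h1 : ∀ x : ZMod N, H x =
          Real.exp (-(lam * t)) * Real.exp (lam * (μ - ‖f x‖)) := by
        intro x
        rw [hHdef]
        simp only
        rw [← Real.exp_add]
        congr 1
        ring
      rw [Finset.sum_congr rfl fun x _ => h1 x, ← Finset.mul_sum]
      have hμsum' : ∑ x : ZMod N, (μ - ‖f x‖) = 0 := by
        rw [← neg_eq_zero, ← Finset.sum_neg_distrib]
        rw [← hμsum]
        apply Finset.sum_congr rfl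
        intro x _
        ring
      have h2 := mgf_bound (fun x : ZMod N => μ - ‖f x‖) (μ - c) c lam
        hμsum' (fun x => by show μ - c ≤ μ - ‖f x‖; have := hac x; linarith)
        (fun x => by show μ - ‖f x‖ ≤ μ - c + c; have := habs0 x; linarith) hlam
      rw [ZMod.card] at h2
      calc Real.exp (-(lam * t)) * ∑ x : ZMod N, Real.exp (lam * (μ - ‖f x‖))
          ≤ Real.exp (-(lam * t)) * ((N:ℝ) * Real.exp (lam ^ 2 * c ^ 2 / 8)) :=
            mul_le_mul_of_nonneg_left h2 (Real.exp_pos _).le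
        _ = (N : ℝ) * q := by rw [← hexp_eq]; ring
    have hq0 : 0 < q := Real.exp_pos _
    -- AM-GM step
    have hprod : ∀ v : ZMod N → ℝ, (∀ x, 0 < v x) → (∑ x : ZMod N, v x ≤ (N:ℝ) * q) →
        ∏ x : ZMod N, (p * v x + (1 - p)) ≤ (1 - p + p * q) ^ N := by
      intro v hv hvs
      have h1 := amgm_fin (fun x : ZMod N => p * v x + (1 - p))
        (fun x => add_nonneg (mul_nonneg hp0.le (hv x).le) h1p)
      rw [ZMod.card] at h1
      refine le_trans h1 (pow_le_pow_left₀ ?_ ?_ N)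
      · apply div_nonneg _ hNR.le
        apply Finset.sum_nonneg
        intro x _
        exact add_nonneg (mul_nonneg hp0.le (hv x).le) h1p
      · have h2 : ∑ x : ZMod N, (p * v x + (1 - p)) = p * (∑ x : ZMod N, v x) + (N:ℝ) * (1-p) := by
          rw [Finset.sum_add_distrib, ← Finset.mul_sum, Finset.sum_const, Finset.card_univ,
            ZMod.card, nsmul_eq_mul]
        rw [h2, div_le_iff₀ hNR]
        have h3 : p * (∑ x : ZMod N, v x) ≤ p * ((N:ℝ) * q) :=
          mul_le_mul_of_nonneg_left hvs hp0.le
        nlinarith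
    have hprodG := hprod G (fun x => Real.exp_pos _) hGsum
    have hprodH := hprod H (fun x => Real.exp_pos _) hHsum
    -- expansion of products into sums over subsets
    have hup : ∑ M : Finset (ZMod N), (∏ x ∈ M, (p * G x)) * (1-p) ^ (N - M.card)
        = ∏ x : ZMod N, (p * G x + (1-p)) := by
      rw [Fintype.prod_add]
      apply Finset.sum_congr rfl
      intro M _
      rw [Finset.prod_const, Finset.card_compl, ZMod.card]
    have hlo : ∑ M : Finset (ZMod N), (∏ x ∈ M, (p * H x)) * (1-p) ^ (N - M.card)
        = ∏ x : ZMod N, (p * H x + (1-p)) := by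
      rw [Fintype.prod_add]
      apply Finset.sum_congr rfl
      intro M _
      rw [Finset.prod_const, Finset.card_compl, ZMod.card]
    -- pointwise bound
    have hmain : ∀ M : Finset (ZMod N),
        (if 1 ≤ M.card ∧ t ≤ |1 / (M.card : ℝ) * ∑ x ∈ M, ‖f x‖ - μ|
          then p ^ M.card * (1 - p) ^ (N - M.card) else 0)
        ≤ (∏ x ∈ M, (p * G x)) * (1-p) ^ (N - M.card)
          + (∏ x ∈ M, (p * H x)) * (1-p) ^ (N - M.card) := by
      intro M
      have hTup0 : 0 ≤ (∏ x ∈ M, (p * G x)) * (1-p) ^ (N - M.card) :=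
        mul_nonneg (Finset.prod_nonneg fun x _ => mul_nonneg hp0.le (Real.exp_pos _).le)
          (pow_nonneg h1p _)
      have hTlo0 : 0 ≤ (∏ x ∈ M, (p * H x)) * (1-p) ^ (N - M.card) :=
        mul_nonneg (Finset.prod_nonneg fun x _ => mul_nonneg hp0.le (Real.exp_pos _).le)
          (pow_nonneg h1p _)
      split_ifs with hev
      · obtain ⟨hk, hts⟩ := hev
        have hkR : 0 < (M.card : ℝ) := by exact_mod_cast hk
        have hprodpow : ∀ v : ZMod N → ℝ, ∏ x ∈ M, (p * v x) = p ^ M.card * ∏ x ∈ M, v x := by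
          intro v
          rw [Finset.prod_mul_distrib, Finset.prod_const]
        rcases le_abs.mp hts with hcase | hcase
        · -- upper tail
          have hS : (M.card : ℝ) * (μ + t) ≤ ∑ x ∈ M, ‖f x‖ := by
            have h1 : μ + t ≤ 1 / (M.card : ℝ) * ∑ x ∈ M, ‖f x‖ := by linarith
            have h2 := mul_le_mul_of_nonneg_right h1 hkR.le
            have h3 : 1 / (M.card : ℝ) * (∑ x ∈ M, ‖f x‖) * (M.card : ℝ)
                = ∑ x ∈ M, ‖f x‖ := by field_simp
            rw [h3] at h2
            linarith
          have hGe : (1:ℝ) ≤ ∏ x ∈ M, G x := by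
            have he : ∏ x ∈ M, G x
                = Real.exp (∑ x ∈ M, lam * (‖f x‖ - μ - t)) :=
              (Real.exp_sum M _).symm
            have harg : ∑ x ∈ M, lam * (‖f x‖ - μ - t)
                = lam * ((∑ x ∈ M, ‖f x‖) - (M.card : ℝ) * (μ + t)) := by
              rw [← Finset.mul_sum]
              congr 1
              rw [Finset.sum_sub_distrib, Finset.sum_sub_distrib, Finset.sum_const,
                Finset.sum_const, nsmul_eq_mul, nsmul_eq_mul]
              ring
            rw [he, harg]
            exact Real.one_le_exp (mul_nonneg hlam (by linarith))
          calc p ^ M.card * (1-p) ^ (N - M.card)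
              ≤ (p ^ M.card * ∏ x ∈ M, G x) * (1-p) ^ (N - M.card) := by
                apply mul_le_mul_of_nonneg_right _ (pow_nonneg h1p _)
                exact le_mul_of_one_le_right (pow_nonneg hp0.le _) hGe
            _ = (∏ x ∈ M, (p * G x)) * (1-p) ^ (N - M.card) := by rw [hprodpow]
            _ ≤ _ := le_add_of_nonneg_right hTlo0
        · -- lower tail
          have hS : ∑ x ∈ M, ‖f x‖ ≤ (M.card : ℝ) * (μ - t) := by
            have h1 : 1 / (M.card : ℝ) * ∑ x ∈ M, ‖f x‖ ≤ μ - t := by linarith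
            have h2 := mul_le_mul_of_nonneg_right h1 hkR.le
            have h3 : 1 / (M.card : ℝ) * (∑ x ∈ M, ‖f x‖) * (M.card : ℝ)
                = ∑ x ∈ M, ‖f x‖ := by field_simp
            rw [h3] at h2
            linarith
          have hHe : (1:ℝ) ≤ ∏ x ∈ M, H x := by
            have he : ∏ x ∈ M, H x
                = Real.exp (∑ x ∈ M, lam * (μ - t - ‖f x‖)) :=
              (Real.exp_sum M _).symm
            have harg : ∑ x ∈ M, lam * (μ - t - ‖f x‖)
                = lam * ((M.card : ℝ) * (μ - t) - ∑ x ∈ M, ‖f x‖) := by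
              rw [← Finset.mul_sum]
              congr 1
              rw [Finset.sum_sub_distrib, Finset.sum_sub_distrib, Finset.sum_const,
                Finset.sum_const, nsmul_eq_mul, nsmul_eq_mul]
              ring
            rw [he, harg]
            exact Real.one_le_exp (mul_nonneg hlam (by linarith))
          calc p ^ M.card * (1-p) ^ (N - M.card)
              ≤ (p ^ M.card * ∏ x ∈ M, H x) * (1-p) ^ (N - M.card) := by
                apply mul_le_mul_of_nonneg_right _ (pow_nonneg h1p _)
                exact le_mul_of_one_le_right (pow_nonneg hp0.le _) hHe
            _ = (∏ x ∈ M, (p * H x)) * (1-p) ^ (N - M.card) := by rw [hprodpow]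
            _ ≤ _ := le_add_of_nonneg_left hTup0
      · exact add_nonneg hTup0 hTlo0
    calc ∑ M : Finset (ZMod N),
        (if 1 ≤ M.card ∧ t ≤ |1 / (M.card : ℝ) * ∑ x ∈ M, ‖f x‖ - μ|
          then p ^ M.card * (1 - p) ^ (N - M.card) else 0)
        ≤ ∑ M : Finset (ZMod N), ((∏ x ∈ M, (p * G x)) * (1-p) ^ (N - M.card)
            + (∏ x ∈ M, (p * H x)) * (1-p) ^ (N - M.card)) :=
          Finset.sum_le_sum fun M _ => hmain M
      _ = (∑ M : Finset (ZMod N), (∏ x ∈ M, (p * G x)) * (1-p) ^ (N - M.card))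
          + ∑ M : Finset (ZMod N), (∏ x ∈ M, (p * H x)) * (1-p) ^ (N - M.card) :=
          Finset.sum_add_distrib
      _ = (∏ x : ZMod N, (p * G x + (1-p))) + ∏ x : ZMod N, (p * H x + (1-p)) := by
          rw [hup, hlo]
      _ ≤ (1 - p + p * q) ^ N + (1 - p + p * q) ^ N := add_le_add hprodG hprodH
      _ = 2 * (1 - p + p * q) ^ N := by ring
end

section
/- If h: Z_N → C is supported in M ⊆ Z_N and S ⊆ Z_N satisfies δ := |M||S|/N, then ||ĥ||_{L^1(S^c)} − ||ĥ||_{L^1(S)} ≥ (1 − 2δ)·||ĥ||_{L^1(Z_N)}. -/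
open Finset

lemma abs_zmodDft_le {N : ℕ} [NeZero N] (Φ : ZMod N → ℂ) (k : ZMod N) :
    ‖ZMod.dft Φ k‖ ≤ ∑ j, ‖Φ j‖ := by
  rw [ZMod.dft_apply]
  refine (norm_sum_le _ _).trans_eq ?_
  refine Finset.sum_congr rfl fun j _ => ?_
  rw [smul_eq_mul, norm_mul, ZMod.stdAddChar_apply, Circle.norm_coe, one_mul]

lemma abs_le_inv_sum {N : ℕ} [NeZero N] (Φ : ZMod N → ℂ) (x : ZMod N) :
    ‖Φ x‖ ≤ (N : ℝ)⁻¹ * ∑ ω, ‖ZMod.dft Φ ω‖ := by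
  have h1 : ZMod.dft (ZMod.dft Φ) (-x) = (N : ℂ) * Φ x := by
    rw [ZMod.dft_dft]; simp
  have h2 := abs_zmodDft_le (N := N) (ZMod.dft Φ) (-x)
  rw [h1, norm_mul, Complex.norm_natCast] at h2
  have hN : (0 : ℝ) < N := by exact_mod_cast Nat.pos_of_ne_zero (NeZero.ne N)
  rw [inv_mul_eq_div, le_div_iff₀ hN]
  linarith [h2]

lemma dft_eq_zmod {N : ℕ} [NeZero N] (h : ZMod N → ℂ) (ω : ZMod N) :
    dft h ω = (Real.sqrt N : ℂ)⁻¹ * ZMod.dft h ω := by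
  rw [dft, ZMod.dft_apply]
  congr 1
  refine Finset.sum_congr rfl fun x _ => ?_
  rw [smul_eq_mul, mul_comm ((ZMod.stdAddChar (-(x * ω)) : ℂ)) (h x)]
  congr 1
  have hx : (-(x * ω) : ZMod N) = ((-(ω.val * x.val : ℤ) : ℤ) : ZMod N) := by
    push_cast
    rw [ZMod.natCast_val, ZMod.natCast_val, ZMod.cast_id, ZMod.cast_id]
    ring
  rw [hx, ZMod.stdAddChar_coe]
  congr 1
  push_cast
  ring

theorem stmt19 {N : ℕ} [NeZero N] (h : ZMod N → ℂ) (M S : Finset (ZMod N))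
    (hsupp : ∀ x, h x ≠ 0 → x ∈ M) :
    (1 - 2 * ((M.card : ℝ) * S.card / N)) * l1 univ (dft h) ≤
      l1 Sᶜ (dft h) - l1 S (dft h) := by
  set T : ℝ := ∑ ω, ‖ZMod.dft h ω‖ with hT
  have hTnonneg : 0 ≤ T := Finset.sum_nonneg fun _ _ => norm_nonneg _
  have hsqrt : (0 : ℝ) ≤ (Real.sqrt N)⁻¹ := inv_nonneg.mpr (Real.sqrt_nonneg _)
  -- l1 over any set A equals (√N)⁻¹ * sum over A of |ZMod.dft h ω|
  have hl1 : ∀ A : Finset (ZMod N),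
      l1 A (dft h) = (Real.sqrt N)⁻¹ * ∑ ω ∈ A, ‖ZMod.dft h ω‖ := by
    intro A
    rw [l1, Finset.mul_sum]
    refine Finset.sum_congr rfl fun ω _ => ?_
    rw [dft_eq_zmod, norm_mul, norm_inv, Complex.norm_real, Real.norm_eq_abs, abs_of_nonneg (Real.sqrt_nonneg _)]
  -- pointwise bound: |ZMod.dft h m| ≤ M.card / N * T
  have hpt : ∀ m : ZMod N, ‖ZMod.dft h m‖ ≤ (M.card : ℝ) / N * T := by
    intro m
    refine (abs_zmodDft_le h m).trans ?_
    have h1 : ∑ j, ‖h j‖ = ∑ j ∈ M, ‖h j‖ := by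
      refine (Finset.sum_subset (Finset.subset_univ M) fun x _ hx => ?_).symm
      by_contra hne
      exact hx (hsupp x (fun h0 => hne (by rw [h0, norm_zero])))
    rw [h1]
    calc ∑ j ∈ M, ‖h j‖ ≤ ∑ _j ∈ M, (N : ℝ)⁻¹ * T :=
          Finset.sum_le_sum fun j _ => abs_le_inv_sum h j
      _ = (M.card : ℝ) * ((N : ℝ)⁻¹ * T) := by rw [Finset.sum_const, nsmul_eq_mul]
      _ = (M.card : ℝ) / N * T := by ring
  -- bound on S-part
  have hS : ∑ ω ∈ S, ‖ZMod.dft h ω‖ ≤ (S.card : ℝ) * ((M.card : ℝ) / N * T) := by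
    calc ∑ ω ∈ S, ‖ZMod.dft h ω‖ ≤ ∑ _ω ∈ S, (M.card : ℝ) / N * T :=
          Finset.sum_le_sum fun ω _ => hpt ω
      _ = (S.card : ℝ) * ((M.card : ℝ) / N * T) := by rw [Finset.sum_const, nsmul_eq_mul]
  have hsplit : ∑ ω ∈ Sᶜ, ‖ZMod.dft h ω‖ + ∑ ω ∈ S, ‖ZMod.dft h ω‖ = T := by
    rw [hT, ← Finset.sum_add_sum_compl S]
    ring
  have key : (1 - 2 * ((M.card : ℝ) * S.card / N)) * T ≤
      (∑ ω ∈ Sᶜ, ‖ZMod.dft h ω‖) - ∑ ω ∈ S, ‖ZMod.dft h ω‖ := by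
    have hr : (S.card : ℝ) * ((M.card : ℝ) / N * T) = (M.card : ℝ) * S.card / N * T := by ring
    linarith [hS, hsplit, hr]
  rw [hl1, hl1, hl1]
  have := mul_le_mul_of_nonneg_left key hsqrt
  nlinarith [this]
end
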